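/- Let a and p be real numbers with 0 < a < 1/√2 and a < p < √((1+a^2)/3). Then there exist unique real numbers b and c with b ∈ (a, p) and c > 0 such that for every complex z one has B_2(z)^3 − A(z)B_1(z)^2 = (1 + a^2 − 3p^2)(z^2 − b^2)(z^2 + c^2); in particular the complex zeros of B_2^3 − A·B_1^2 are exactly ±b and ±ic. -/

import Mathlib

set_option maxHeartbeats 1000000

open Complex

/-- `A(z) = (z²-1)(z²-a²)`. -/
noncomputable def polyA (a : ℝ) (z : ℂ) : ℂ := (z ^ 2 - 1) * (z ^ 2 - (a : ℂ) ^ 2)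

/-- `B₂(z) = z²-p²`. -/
noncomputable def polyB2 (p : ℝ) (z : ℂ) : ℂ := z ^ 2 - (p : ℂ) ^ 2

/-- `B₁(z) = z`. -/
noncomputable def polyB1 (z : ℂ) : ℂ := z

lemma caseI_aux (a p : ℝ) (ha0 : 0 < a) (h0p : 0 < p) (hap : a < p)
    (hp2 : p ^ 2 < (1 + a ^ 2) / 3) (ha2 : a ^ 2 < 1 / 2) :
    ∃ b c : ℝ, a < b ∧ b < p ∧ 0 < c ∧
      (1 + a ^ 2 - 3 * p ^ 2) * (c ^ 2 - b ^ 2) = 3 * p ^ 4 - a ^ 2 ∧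
      (1 + a ^ 2 - 3 * p ^ 2) * (b ^ 2 * c ^ 2) = p ^ 6 := by
  obtain ⟨K, hKdef⟩ : ∃ x, x = 1 + a ^ 2 - 3 * p ^ 2 := ⟨_, rfl⟩
  obtain ⟨Q, hQdef⟩ : ∃ x, x = 3 * p ^ 4 - a ^ 2 := ⟨_, rfl⟩
  rw [← hKdef, ← hQdef]
  have hK : 0 < K := by rw [hKdef]; linarith
  obtain ⟨D, hDdef⟩ : ∃ x, x = Q ^ 2 + 4 * K * p ^ 6 := ⟨_, rfl⟩
  have hDpos : 0 < D := by
    rw [hDdef]; nlinarith [sq_nonneg Q, mul_pos hK (pow_pos h0p 6)]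
  obtain ⟨s, hsdef⟩ : ∃ x, x = Real.sqrt D := ⟨_, rfl⟩
  have hs0 : 0 ≤ s := hsdef ▸ Real.sqrt_nonneg D
  have hs2 : s ^ 2 = D := hsdef ▸ Real.sq_sqrt hDpos.le
  have habs : |Q| < s := by
    rw [hsdef, ← Real.sqrt_sq_eq_abs]
    exact Real.sqrt_lt_sqrt (sq_nonneg Q)
      (by rw [hDdef]; nlinarith [mul_pos hK (pow_pos h0p 6)])
  have hQs : Q < s := lt_of_le_of_lt (le_abs_self Q) habs
  have hQs' : -Q < s := lt_of_le_of_lt (neg_le_abs Q) habs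
  have h2K : (0:ℝ) < 2 * K := by linarith
  have hb2pos : 0 < (-Q + s) / (2 * K) := div_pos (by linarith) h2K
  have hc2pos : 0 < (Q + s) / (2 * K) := div_pos (by linarith) h2K
  -- f(a²) < 0
  have keya : K * a ^ 4 + Q * a ^ 2 - p ^ 6 = (a ^ 2 - p ^ 2) ^ 3 := by
    rw [hKdef, hQdef]; ring
  have hfa : K * a ^ 4 + Q * a ^ 2 - p ^ 6 < 0 := by
    rw [keya]
    exact Odd.pow_neg ⟨1, by ring⟩ (by nlinarith)
  have hta : 2 * K * a ^ 2 + Q < s := by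
    rcases le_or_gt s (2 * K * a ^ 2 + Q) with h | h
    · exfalso
      have h1 : 0 ≤ (2 * K * a ^ 2 + Q - s) * (2 * K * a ^ 2 + Q + s) :=
        mul_nonneg (by linarith) (by linarith)
      have h2 : 0 < K * (p ^ 6 - (K * a ^ 4 + Q * a ^ 2)) :=
        mul_pos hK (by linarith)
      nlinarith [hs2, h1, h2]
    · exact h
  -- f(p²) > 0
  have keyp : K * p ^ 4 + Q * p ^ 2 - p ^ 6 = p ^ 2 * (p ^ 2 - a ^ 2) * (1 - p ^ 2) := by
    rw [hKdef, hQdef]; ring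
  have hfp : 0 < K * p ^ 4 + Q * p ^ 2 - p ^ 6 := by
    rw [keyp]
    have h1 : 0 < p ^ 2 - a ^ 2 := by nlinarith
    have h2 : 0 < 1 - p ^ 2 := by nlinarith
    positivity
  have hRpos : 0 < 2 * K * p ^ 2 + Q := by
    have hm : 0 < (K * p ^ 2 + Q) * p ^ 2 := by nlinarith [hfp, pow_pos h0p 6]
    have hKQ : 0 < K * p ^ 2 + Q := by
      by_contra h
      push_neg at h
      nlinarith [pow_pos h0p 2]
    nlinarith [mul_pos hK (pow_pos h0p 2)]
  have htp : s < 2 * K * p ^ 2 + Q := by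
    rcases le_or_gt (2 * K * p ^ 2 + Q) s with h | h
    · exfalso
      have h1 : 0 ≤ (s - (2 * K * p ^ 2 + Q)) * (s + (2 * K * p ^ 2 + Q)) :=
        mul_nonneg (by linarith) (by linarith)
      have h2 : 0 < K * (K * p ^ 4 + Q * p ^ 2 - p ^ 6) := mul_pos hK hfp
      nlinarith [hs2, h1, h2]
    · exact h
  have hab2 : a ^ 2 < (-Q + s) / (2 * K) := by
    rw [lt_div_iff₀ h2K]; linarith
  have hb2p : (-Q + s) / (2 * K) < p ^ 2 := by
    rw [div_lt_iff₀ h2K]; linarith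
  have hKne : K ≠ 0 := ne_of_gt hK
  refine ⟨Real.sqrt ((-Q + s) / (2 * K)), Real.sqrt ((Q + s) / (2 * K)),
    (Real.lt_sqrt ha0.le).mpr hab2, (Real.sqrt_lt' h0p).mpr hb2p,
    Real.sqrt_pos.mpr hc2pos, ?_, ?_⟩
  · rw [Real.sq_sqrt hc2pos.le, Real.sq_sqrt hb2pos.le]
    field_simp
    ring
  · rw [Real.sq_sqrt hb2pos.le, Real.sq_sqrt hc2pos.le]
    field_simp
    linear_combination hs2 + hDdef

/-- Case I: for `0 < a < 1/√2` and `a < p < √((1+a²)/3)` there are unique `b ∈ (a,p)`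
and `c > 0` with `B₂³ − A·B₁² = (1+a²−3p²)(z²−b²)(z²+c²)`; in particular the zeros of
`B₂³ − A·B₁²` are exactly `±b` and `±ic`. -/
theorem caseI_branch_points (a p : ℝ) (ha0 : 0 < a) (ha1 : a < 1 / Real.sqrt 2)
    (hp0 : a < p) (hp1 : p < Real.sqrt ((1 + a ^ 2) / 3)) :
    ∃! bc : ℝ × ℝ,
      (a < bc.1 ∧ bc.1 < p ∧ 0 < bc.2 ∧
        (∀ z : ℂ, (polyB2 p z) ^ 3 - polyA a z * (polyB1 z) ^ 2
          = (1 + (a : ℂ) ^ 2 - 3 * (p : ℂ) ^ 2) * (z ^ 2 - (bc.1 : ℂ) ^ 2)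
              * (z ^ 2 + (bc.2 : ℂ) ^ 2))) ∧
      (∀ z : ℂ, (polyB2 p z) ^ 3 - polyA a z * (polyB1 z) ^ 2 = 0 ↔
        z = (bc.1 : ℂ) ∨ z = -(bc.1 : ℂ) ∨ z = (bc.2 : ℂ) * Complex.I
          ∨ z = -((bc.2 : ℂ) * Complex.I)) := by
  have h0p : 0 < p := ha0.trans hp0
  have hsqrt2 : (0:ℝ) < Real.sqrt 2 := Real.sqrt_pos.mpr (by norm_num)
  have ha2 : a ^ 2 < 1 / 2 := by
    have h := (lt_div_iff₀ hsqrt2).mp ha1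
    nlinarith [Real.sq_sqrt (show (0:ℝ) ≤ 2 by norm_num), mul_pos ha0 hsqrt2]
  have hp2 : p ^ 2 < (1 + a ^ 2) / 3 := (Real.lt_sqrt h0p.le).mp hp1
  obtain ⟨b, c, hab, hbp, hc0, hd, hpr⟩ := caseI_aux a p ha0 h0p hp0 hp2 ha2
  have hb0 : 0 < b := ha0.trans hab
  -- complex versions of the coefficient identities
  have hdC : ((1:ℂ) + (a:ℂ) ^ 2 - 3 * (p:ℂ) ^ 2) * ((c:ℂ) ^ 2 - (b:ℂ) ^ 2)
      = 3 * (p:ℂ) ^ 4 - (a:ℂ) ^ 2 := by exact_mod_cast hd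
  have hprC : ((1:ℂ) + (a:ℂ) ^ 2 - 3 * (p:ℂ) ^ 2) * ((b:ℂ) ^ 2 * (c:ℂ) ^ 2)
      = (p:ℂ) ^ 6 := by exact_mod_cast hpr
  have hK : (0:ℝ) < 1 + a ^ 2 - 3 * p ^ 2 := by linarith
  have hK0 : ((1:ℂ) + (a:ℂ) ^ 2 - 3 * (p:ℂ) ^ 2) ≠ 0 := by
    have : ((1 + a ^ 2 - 3 * p ^ 2 : ℝ) : ℂ) ≠ 0 := by
      exact_mod_cast ne_of_gt hK
    simpa using this
  have hident : ∀ z : ℂ, (polyB2 p z) ^ 3 - polyA a z * (polyB1 z) ^ 2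
      = (1 + (a : ℂ) ^ 2 - 3 * (p : ℂ) ^ 2) * (z ^ 2 - (b : ℂ) ^ 2)
        * (z ^ 2 + (c : ℂ) ^ 2) := by
    intro z
    simp only [polyA, polyB2, polyB1]
    linear_combination (-(z ^ 2)) * hdC + hprC
  have hfact : ∀ z : ℂ, (polyB2 p z) ^ 3 - polyA a z * (polyB1 z) ^ 2
      = (1 + (a : ℂ) ^ 2 - 3 * (p : ℂ) ^ 2)
        * ((z - (b:ℂ)) * (z + (b:ℂ))) * ((z - (c:ℂ) * I) * (z + (c:ℂ) * I)) := by
    intro z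
    rw [hident z]
    linear_combination ((1 + (a:ℂ) ^ 2 - 3 * (p:ℂ) ^ 2) * (z ^ 2 - (b:ℂ) ^ 2)
      * (c:ℂ) ^ 2) * Complex.I_sq
  refine ⟨(b, c), ⟨⟨hab, hbp, hc0, hident⟩, ?_⟩, ?_⟩
  · intro z
    rw [hfact z]
    simp only [mul_eq_zero, hK0, false_or, sub_eq_zero, add_eq_zero_iff_eq_neg]
    tauto
  · rintro ⟨b', c'⟩ ⟨⟨hab', hb'p, hc'0, hid'⟩, -⟩
    have hb'0 : 0 < b' := ha0.trans hab'
    -- first component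
    have e1 := hid' (b:ℂ)
    have e2 := hident (b:ℂ)
    have h1 : ((1:ℂ) + (a:ℂ) ^ 2 - 3 * (p:ℂ) ^ 2) * ((b:ℂ) ^ 2 - (b':ℂ) ^ 2)
        * ((b:ℂ) ^ 2 + (c':ℂ) ^ 2) = 0 := by linear_combination e2 - e1
    have hYne : ((b:ℂ) ^ 2 + (c':ℂ) ^ 2) ≠ 0 := by
      have hpos : (0:ℝ) < b ^ 2 + c' ^ 2 := by positivity
      intro h
      have : (b ^ 2 + c' ^ 2 : ℝ) = 0 := by exact_mod_cast h
      linarith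
    have hX : (b:ℂ) ^ 2 - (b':ℂ) ^ 2 = 0 := by
      rcases mul_eq_zero.mp h1 with h | h
      · rcases mul_eq_zero.mp h with h' | h'
        · exact absurd h' hK0
        · exact h'
      · exact absurd h hYne
    have hbb : b ^ 2 = b' ^ 2 := by
      have := sub_eq_zero.mp hX
      exact_mod_cast this
    have hb'b : b' = b := by
      have hz : (b' - b) * (b' + b) = 0 := by linear_combination -hbb
      rcases mul_eq_zero.mp hz with h | h
      · linarith
      · linarith
    -- second component
    have e3 := hid' ((c':ℂ) * I)
    have e4 := hident ((c':ℂ) * I)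
    have hw : ((c':ℂ) * I) ^ 2 = -((c':ℂ)) ^ 2 := by
      rw [mul_pow, Complex.I_sq]; ring
    simp only [polyA, polyB2, polyB1] at e3 e4
    rw [hw] at e3 e4
    have h2 : ((1:ℂ) + (a:ℂ) ^ 2 - 3 * (p:ℂ) ^ 2) * ((c':ℂ) ^ 2 + (b:ℂ) ^ 2)
        * ((c:ℂ) ^ 2 - (c':ℂ) ^ 2) = 0 := by linear_combination e4 - e3
    have hYne2 : ((c':ℂ) ^ 2 + (b:ℂ) ^ 2) ≠ 0 := by
      have hpos : (0:ℝ) < c' ^ 2 + b ^ 2 := by positivity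
      intro h
      have : (c' ^ 2 + b ^ 2 : ℝ) = 0 := by exact_mod_cast h
      linarith
    have hX2 : (c:ℂ) ^ 2 - (c':ℂ) ^ 2 = 0 := by
      rcases mul_eq_zero.mp h2 with h | h
      · rcases mul_eq_zero.mp h with h' | h'
        · exact absurd h' hK0
        · exact absurd h' hYne2
      · exact h
    have hcc : c ^ 2 = c' ^ 2 := by
      have := sub_eq_zero.mp hX2
      exact_mod_cast this
    have hc'c : c' = c := by
      have hz : (c' - c) * (c' + c) = 0 := by linear_combination -hcc
      rcases mul_eq_zero.mp hz with h | h
      · linarith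
      · linarith
    simp only [Prod.mk.injEq]
    exact ⟨hb'b, hc'c⟩
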